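/- For every d ≥ 4 there exist d×d stochastic matrices M and M' such that ρ([M,M']_√) = 1 (equivalently, the Kazakos pseudo-distance d_kaz(M,M') = 1 − ρ([M,M']_√) vanishes) while max_{i∈[d]} ∑_{j∈[d]} |M(i,j) − M'(i,j)| = 1; in particular M ≠ M'. -/

import Mathlib

open Finset

noncomputable section

/-- A row-stochastic matrix. -/
def IsStochastic {d : ℕ} (M : Matrix (Fin d) (Fin d) ℝ) : Prop :=
  (∀ i j, 0 ≤ M i j) ∧ ∀ i, ∑ j, M i j = 1

/-- Spectral radius of a real square matrix: the largest absolute value of a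
(complex) eigenvalue, i.e. of a root of the characteristic polynomial over `ℂ`. -/
def specRad {d : ℕ} (A : Matrix (Fin d) (Fin d) ℝ) : ℝ :=
  sSup {r : ℝ | ∃ μ : ℂ, ((A.map (Complex.ofReal)).charpoly).IsRoot μ ∧ r = ‖μ‖}

/-- For every `d ≥ 4` there are stochastic matrices at Kazakos pseudo-distance `0`
(spectral radius of the geometric-mean matrix equal to `1`) whose max-row `ℓ₁`
distance equals `1`; in particular they are distinct. -/
theorem kazakos_vanishes_but_tv_positive (d : ℕ) (hd : 4 ≤ d) :
    ∃ M M' : Matrix (Fin d) (Fin d) ℝ,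
      IsStochastic M ∧ IsStochastic M' ∧
      specRad (Matrix.of fun i j => Real.sqrt (M i j * M' i j)) = 1 ∧
      (⨆ i, ∑ j, |M i j - M' i j|) = 1 ∧ M ≠ M' := by
  have h0 : (0:ℕ) < d := by omega
  have h1 : (1:ℕ) < d := by omega
  have h2 : (2:ℕ) < d := by omega
  set i0 : Fin d := ⟨0, h0⟩
  set i1 : Fin d := ⟨1, h1⟩
  set i2 : Fin d := ⟨2, h2⟩
  have h01 : i0 ≠ i1 := by simp [i0, i1, Fin.ext_iff]
  have h02 : i0 ≠ i2 := by simp [i0, i2, Fin.ext_iff]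
  have h12 : i1 ≠ i2 := by simp [i1, i2, Fin.ext_iff]
  classical
  haveI : Nonempty (Fin d) := ⟨i0⟩
  refine ⟨Matrix.of fun i j =>
      if i = i0 then (if j = i0 then (1:ℝ)/2 else 0) + (if j = i1 then 1/2 else 0)
      else if j = i then 1 else 0,
    Matrix.of fun i j =>
      if i = i0 then (if j = i1 then (1:ℝ)/2 else 0) + (if j = i2 then 1/2 else 0)
      else if j = i then 1 else 0, ?_, ?_, ?_, ?_, ?_⟩
  · constructor
    · intro i j
      simp only [Matrix.of_apply]
      split_ifs <;> norm_num
    · intro i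
      simp only [Matrix.of_apply]
      by_cases hi : i = i0 <;>
        simp [hi, Finset.sum_add_distrib, Finset.sum_ite_eq'] <;> norm_num
  · constructor
    · intro i j
      simp only [Matrix.of_apply]
      split_ifs <;> norm_num
    · intro i
      simp only [Matrix.of_apply]
      by_cases hi : i = i0 <;>
        simp [hi, Finset.sum_add_distrib, Finset.sum_ite_eq'] <;> norm_num
  · -- spectral radius
    have hG : (Matrix.of fun i j => Real.sqrt
        ((Matrix.of fun i j =>
          if i = i0 then (if j = i0 then (1:ℝ)/2 else 0) + (if j = i1 then 1/2 else 0)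
          else if j = i then 1 else 0) i j *
         (Matrix.of fun i j =>
          if i = i0 then (if j = i1 then (1:ℝ)/2 else 0) + (if j = i2 then 1/2 else 0)
          else if j = i then 1 else 0) i j))
        = Matrix.of (fun i j => if i = i0 then (if j = i1 then (1:ℝ)/2 else 0)
            else if j = i then 1 else 0) := by
      ext i j
      simp only [Matrix.of_apply]
      have hs : Real.sqrt ((2:ℝ)⁻¹ * 2⁻¹) = 2⁻¹ :=
        Real.sqrt_mul_self (by norm_num)
      by_cases hi : i = i0
      · subst hi
        by_cases hj : j = i1
        · subst hj
          simp [h01.symm, h12, hs]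
        · by_cases hj0 : j = i0
          · subst hj0; simp [h01, h02]
          · by_cases hj2 : j = i2
            · subst hj2; simp [h02.symm, h12.symm]
            · simp [hj, hj0, hj2]
      · by_cases hj : j = i
        · simp [hj, hi]
        · simp [hj, hi]
    rw [hG]
    set A : Matrix (Fin d) (Fin d) ℂ :=
      ((Matrix.of (fun i j => if i = i0 then (if j = i1 then (1:ℝ)/2 else 0)
            else if j = i then 1 else 0)).map Complex.ofReal) with hA
    have htri : A.BlockTriangular id := by
      intro i j hij
      simp only [A, Matrix.map_apply, Matrix.of_apply, id] at hij ⊢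
      by_cases hi : i = i0
      · subst hi
        have : j ≠ i1 := by
          intro h; subst h; exact absurd hij (by simp [i0, i1])
        simp [this]
      · have : j ≠ i := fun h => by subst h; exact lt_irrefl _ hij
        simp [hi, this]
    have hdiag : ∀ i : Fin d, A i i = if i = i0 then 0 else 1 := by
      intro i
      by_cases hi : i = i0
      · subst hi; simp [A, h01]
      · simp [A, hi]
    have hcp : A.charpoly = ∏ i : Fin d, (Polynomial.X - Polynomial.C (A i i)) :=
      Matrix.charpoly_of_upperTriangular A htri
    have hroot : ∀ μ : ℂ, A.charpoly.IsRoot μ ↔ (μ = 0 ∨ μ = 1) := by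
      intro μ
      rw [hcp]
      simp only [Polynomial.IsRoot, Polynomial.eval_prod, Finset.prod_eq_zero_iff,
        Polynomial.eval_sub, Polynomial.eval_X, Polynomial.eval_C, sub_eq_zero]
      constructor
      · rintro ⟨i, -, h⟩
        rw [hdiag i] at h
        split_ifs at h <;> [left; right] <;> exact h
      · rintro (h | h)
        · exact ⟨i0, Finset.mem_univ _, by rw [hdiag, if_pos rfl, h]⟩
        · exact ⟨i1, Finset.mem_univ _, by rw [hdiag, if_neg h01.symm, h]⟩
    have hset : {r : ℝ | ∃ μ : ℂ, A.charpoly.IsRoot μ ∧ r = ‖μ‖}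
        = {0, 1} := by
      ext r
      simp only [Set.mem_setOf_eq, Set.mem_insert_iff, Set.mem_singleton_iff]
      constructor
      · rintro ⟨μ, hμ, rfl⟩
        rcases (hroot μ).1 hμ with h | h <;> subst h <;> simp
      · rintro (rfl | rfl)
        · exact ⟨0, (hroot 0).2 (Or.inl rfl), by simp⟩
        · exact ⟨1, (hroot 1).2 (Or.inr rfl), by simp⟩
    rw [specRad, ← hA, hset]
    rw [csSup_pair]
    simp
  · -- sup of row l1 distances
    have hval : ∀ i : Fin d, (∑ j, |(Matrix.of fun i j =>
        if i = i0 then (if j = i0 then (1:ℝ)/2 else 0) + (if j = i1 then 1/2 else 0)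
        else if j = i then 1 else 0) i j -
        (Matrix.of fun i j =>
        if i = i0 then (if j = i1 then (1:ℝ)/2 else 0) + (if j = i2 then 1/2 else 0)
        else if j = i then 1 else 0) i j|) = if i = i0 then 1 else 0 := by
      intro i
      by_cases hi : i = i0
      · subst hi
        rw [if_pos rfl]
        have key : ∀ j : Fin d,
            |(Matrix.of fun i j =>
              if i = i0 then (if j = i0 then (1:ℝ)/2 else 0) + (if j = i1 then 1/2 else 0)
              else if j = i then 1 else 0) i0 j -
            (Matrix.of fun i j =>
              if i = i0 then (if j = i1 then (1:ℝ)/2 else 0) + (if j = i2 then 1/2 else 0)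
              else if j = i then 1 else 0) i0 j|
            = (if j = i0 then (1:ℝ)/2 else 0) + (if j = i2 then 1/2 else 0) := by
          intro j
          by_cases hj0 : j = i0
          · subst hj0; simp [h01, h02]
          · by_cases hj1 : j = i1
            · subst hj1; simp [h01.symm, h12]
            · by_cases hj2 : j = i2
              · subst hj2; simp [h02.symm, h12.symm]
              · simp [hj0, hj1, hj2]
        rw [Finset.sum_congr rfl (fun j _ => key j)]
        rw [Finset.sum_add_distrib, Finset.sum_ite_eq', Finset.sum_ite_eq']
        simp
        norm_num
      · simp [hi]
    have hfun : (fun i => ∑ j, |(Matrix.of fun i j =>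
        if i = i0 then (if j = i0 then (1:ℝ)/2 else 0) + (if j = i1 then 1/2 else 0)
        else if j = i then 1 else 0) i j -
        (Matrix.of fun i j =>
        if i = i0 then (if j = i1 then (1:ℝ)/2 else 0) + (if j = i2 then 1/2 else 0)
        else if j = i then 1 else 0) i j|) = fun i => if i = i0 then (1:ℝ) else 0 := by
      funext i; exact hval i
    rw [hfun]
    apply le_antisymm
    · apply ciSup_le
      intro i
      split_ifs <;> norm_num
    · have := le_ciSup (f := fun i : Fin d => if i = i0 then (1:ℝ) else 0)
        (Finite.bddAbove_range _) i0
      simpa using this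
  · -- M ≠ M'
    intro h
    have := congrFun (congrFun h i0) i0
    simp [h01, h02, h01.symm] at this

end
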